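/- The function m ↦ 2E(m)/K(m) − 1 is strictly decreasing on (0,1) and maps (0,1) bijectively onto (−1,1). -/

import Mathlib

open Real MeasureTheory intervalIntegral Set Filter

noncomputable def ellK (m : ℝ) : ℝ :=
  ∫ θ in (0:ℝ)..(π / 2), 1 / Real.sqrt (1 - m * Real.sin θ ^ 2)

noncomputable def ellE (m : ℝ) : ℝ :=
  ∫ θ in (0:ℝ)..(π / 2), Real.sqrt (1 - m * Real.sin θ ^ 2)

lemma pos_aux {m : ℝ} (hm : m < 1) (θ : ℝ) : 0 < 1 - m * Real.sin θ ^ 2 := by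
  rcases le_or_gt m 0 with h | h
  · nlinarith [sq_nonneg (Real.sin θ), mul_nonpos_of_nonpos_of_nonneg h (sq_nonneg (Real.sin θ))]
  · nlinarith [Real.sin_sq_le_one θ, mul_le_mul_of_nonneg_left (Real.sin_sq_le_one θ) h.le]

lemma sqrt_pos_aux {m : ℝ} (hm : m < 1) (θ : ℝ) :
    0 < Real.sqrt (1 - m * Real.sin θ ^ 2) := Real.sqrt_pos.2 (pos_aux hm θ)

lemma contE_inner (m : ℝ) : Continuous fun θ : ℝ => Real.sqrt (1 - m * Real.sin θ ^ 2) :=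
  (continuous_const.sub (continuous_const.mul (Real.continuous_sin.pow 2))).sqrt

lemma contK_inner {m : ℝ} (hm : m < 1) :
    Continuous fun θ : ℝ => 1 / Real.sqrt (1 - m * Real.sin θ ^ 2) :=
  continuous_const.div (contE_inner m) (fun θ => (sqrt_pos_aux hm θ).ne')

lemma intE (m : ℝ) : IntervalIntegrable (fun θ : ℝ => Real.sqrt (1 - m * Real.sin θ ^ 2))
    volume 0 (π/2) := (contE_inner m).intervalIntegrable _ _

lemma intK {m : ℝ} (hm : m < 1) :
    IntervalIntegrable (fun θ : ℝ => 1 / Real.sqrt (1 - m * Real.sin θ ^ 2))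
      volume 0 (π/2) := (contK_inner hm).intervalIntegrable _ _

lemma sin_pos_on {θ : ℝ} (hθ : θ ∈ Set.Ioo 0 (π/2)) : 0 < Real.sin θ :=
  Real.sin_pos_of_pos_of_lt_pi hθ.1 (lt_trans hθ.2 (by linarith [Real.pi_pos]))

lemma ellK_pos {m : ℝ} (hm : m < 1) : 0 < ellK m := by
  refine intervalIntegral.intervalIntegral_pos_of_pos (f := fun θ => 1 / Real.sqrt (1 - m * Real.sin θ ^ 2)) (intK hm) (fun θ => ?_) (by positivity)
  exact div_pos one_pos (sqrt_pos_aux hm θ)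

lemma ellE_pos {m : ℝ} (hm : m < 1) : 0 < ellE m := by
  refine intervalIntegral.intervalIntegral_pos_of_pos (f := fun θ => Real.sqrt (1 - m * Real.sin θ ^ 2)) (intE m) (fun θ => ?_) (by positivity)
  exact sqrt_pos_aux hm θ

lemma ellE_le {m : ℝ} (hm : 0 ≤ m) : ellE m ≤ π/2 := by
  have h : ellE m ≤ ∫ _ in (0:ℝ)..(π/2), (1:ℝ) := by
    refine intervalIntegral.integral_mono_on (by positivity) (intE m)
      (intervalIntegrable_const) (fun θ _ => ?_)
    exact Real.sqrt_le_one.2 (by nlinarith [sq_nonneg (Real.sin θ)])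
  simpa using h

lemma ellE_lt_ellK {m : ℝ} (hm : m ∈ Set.Ioo (0:ℝ) 1) : ellE m < ellK m := by
  have h := intervalIntegral.intervalIntegral_pos_of_pos_on
    (f := fun θ => 1 / Real.sqrt (1 - m * Real.sin θ ^ 2) - Real.sqrt (1 - m * Real.sin θ ^ 2))
    ((intK hm.2).sub (intE m)) (fun θ hθ => ?_) (by positivity)
  · have := (intK hm.2).sub (intE m)
    rw [intervalIntegral.integral_sub (intK hm.2) (intE m)] at h
    have : ellE m < ellK m := by unfold ellE ellK; linarith
    exact this
  · have hs := sin_pos_on hθ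
    have hx : 1 - m * Real.sin θ ^ 2 < 1 := by
      nlinarith [mul_pos hm.1 (pow_pos hs 2)]
    have hx0 := pos_aux hm.2 θ
    have h1 : Real.sqrt (1 - m * Real.sin θ ^ 2) < 1 := by
      have := Real.sqrt_lt_sqrt hx0.le hx
      rwa [Real.sqrt_one] at this
    have h2 : 1 < 1 / Real.sqrt (1 - m * Real.sin θ ^ 2) :=
      one_lt_one_div (Real.sqrt_pos.2 hx0) h1
    linarith

lemma ellE_strict {m₁ m₂ : ℝ} (h1 : 0 < m₁) (h12 : m₁ < m₂) (h2 : m₂ < 1) :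
    ellE m₂ < ellE m₁ := by
  have h := intervalIntegral.intervalIntegral_pos_of_pos_on
    (f := fun θ => Real.sqrt (1 - m₁ * Real.sin θ ^ 2) - Real.sqrt (1 - m₂ * Real.sin θ ^ 2))
    ((intE m₁).sub (intE m₂)) (fun θ hθ => ?_) (by positivity)
  · rw [intervalIntegral.integral_sub (intE m₁) (intE m₂)] at h
    have : ellE m₂ < ellE m₁ := by unfold ellE; linarith
    exact this
  · have hs := sin_pos_on hθ
    have hlt : 1 - m₂ * Real.sin θ ^ 2 < 1 - m₁ * Real.sin θ ^ 2 := by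
      nlinarith [mul_pos (sub_pos.2 h12) (pow_pos hs 2)]
    have := Real.sqrt_lt_sqrt (pos_aux h2 θ).le hlt
    linarith

lemma ellK_strict {m₁ m₂ : ℝ} (h1 : 0 < m₁) (h12 : m₁ < m₂) (h2 : m₂ < 1) :
    ellK m₁ < ellK m₂ := by
  have h := intervalIntegral.intervalIntegral_pos_of_pos_on
    (f := fun θ => 1 / Real.sqrt (1 - m₂ * Real.sin θ ^ 2) - 1 / Real.sqrt (1 - m₁ * Real.sin θ ^ 2))
    ((intK h2).sub (intK (h12.trans h2))) (fun θ hθ => ?_) (by positivity)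
  · rw [intervalIntegral.integral_sub (intK h2) (intK (h12.trans h2))] at h
    have : ellK m₁ < ellK m₂ := by unfold ellK; linarith
    exact this
  · have hs := sin_pos_on hθ
    have hlt : 1 - m₂ * Real.sin θ ^ 2 < 1 - m₁ * Real.sin θ ^ 2 := by
      nlinarith [mul_pos (sub_pos.2 h12) (pow_pos hs 2)]
    have hsq := Real.sqrt_lt_sqrt (pos_aux h2 θ).le hlt
    have := one_div_lt_one_div_of_lt (sqrt_pos_aux h2 θ) hsq
    linarith

lemma ellK_zero : ellK 0 = π/2 := by simp [ellK]

lemma ellE_zero : ellE 0 = π/2 := by simp [ellE]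

lemma ellE_contOn : ContinuousOn ellE (Set.Iio (1:ℝ)) := by
  have : Continuous ellE := by
    have : Continuous (Function.uncurry fun (m : ℝ) (θ : ℝ) => Real.sqrt (1 - m * Real.sin θ ^ 2)) := by
      apply Continuous.sqrt
      fun_prop
    exact intervalIntegral.continuous_parametric_intervalIntegral_of_continuous' this 0 (π/2)
  exact this.continuousOn

lemma ellK_contOn : ContinuousOn ellK (Set.Iio (1:ℝ)) := by
  rw [continuousOn_iff_continuous_restrict]
  have : Continuous (Function.uncurry fun (m : Set.Iio (1:ℝ)) (θ : ℝ) =>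
      1 / Real.sqrt (1 - (m:ℝ) * Real.sin θ ^ 2)) := by
    apply Continuous.div
    · fun_prop
    · apply Continuous.sqrt; fun_prop
    · rintro ⟨⟨m, hm⟩, θ⟩
      exact (sqrt_pos_aux hm θ).ne'
  exact intervalIntegral.continuous_parametric_intervalIntegral_of_continuous' (μ := volume) this 0 (π/2)

lemma ellK_ge {m : ℝ} (hm : m ∈ Set.Ioo (0:ℝ) 1) :
    Real.log ((π/2 + Real.sqrt (1-m)) / Real.sqrt (1-m)) ≤ ellK m := by
  set c := Real.sqrt (1-m) with hc
  have hc0 : 0 < c := Real.sqrt_pos.2 (by linarith [hm.2])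
  have key : ∫ θ in (0:ℝ)..(π/2), 1/(π/2 + c - θ) = Real.log ((π/2 + c) / c) := by
    have := intervalIntegral.integral_comp_sub_left (a := (0:ℝ)) (b := π/2)
      (fun x : ℝ => 1/x) (π/2 + c)
    rw [this, show π/2 + c - π/2 = c by ring, show π/2 + c - 0 = π/2 + c by ring]
    exact integral_one_div (fun h => by
      rcases Set.mem_uIcc.1 h with ⟨h1, _⟩ | ⟨_, h2⟩ <;> linarith [Real.pi_pos])
  rw [← key]
  refine intervalIntegral.integral_mono_on (by positivity) ?_ (intK hm.2) (fun θ hθ => ?_)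
  · apply ContinuousOn.intervalIntegrable
    apply ContinuousOn.div continuousOn_const (by fun_prop)
    intro θ hθ
    rw [Set.uIcc_of_le (by positivity)] at hθ
    have := hθ.2
    have := Real.pi_pos
    nlinarith [hθ.1, hθ.2]
  · have hθ1 := hθ.1
    have hθ2 := hθ.2
    have hcos : Real.cos θ ≤ π/2 - θ := by
      have := Real.sin_le (x := π/2 - θ) (by linarith)
      rwa [Real.sin_pi_div_two_sub] at this
    have hcosnn : 0 ≤ Real.cos θ := Real.cos_nonneg_of_mem_Icc ⟨by linarith, hθ2⟩
    have hsq : 1 - m * Real.sin θ ^ 2 ≤ (π/2 - θ + c)^2 := by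
      have h1 : Real.sin θ ^ 2 + Real.cos θ ^ 2 = 1 := Real.sin_sq_add_cos_sq θ
      have h2 : Real.cos θ ^ 2 ≤ (π/2 - θ)^2 := by nlinarith
      have hc2 : c^2 = 1 - m := Real.sq_sqrt (by linarith [hm.2])
      nlinarith [Real.sin_sq_le_one θ, hm.1, mul_pos hc0 (show (0:ℝ) < π/2 - θ + c - (π/2 - θ) by linarith)]
    have hle : Real.sqrt (1 - m * Real.sin θ ^ 2) ≤ π/2 - θ + c := by
      calc Real.sqrt (1 - m * Real.sin θ ^ 2) ≤ Real.sqrt ((π/2 - θ + c)^2) :=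
            Real.sqrt_le_sqrt hsq
        _ = π/2 - θ + c := Real.sqrt_sq (by linarith)
    rw [show π/2 + c - θ = π/2 - θ + c by ring]
    exact one_div_le_one_div_of_le (sqrt_pos_aux hm.2 θ) hle

theorem twoEoverK_strictAnti_bij :
    StrictAntiOn (fun m => 2 * ellE m / ellK m - 1) (Set.Ioo (0:ℝ) 1) ∧
    Set.BijOn (fun m => 2 * ellE m / ellK m - 1)
      (Set.Ioo (0:ℝ) 1) (Set.Ioo (-1 : ℝ) 1) := by
  set F : ℝ → ℝ := fun m => 2 * ellE m / ellK m - 1 with hF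
  have hanti : StrictAntiOn F (Set.Ioo (0:ℝ) 1) := by
    intro m₁ hm₁ m₂ hm₂ h12
    have hE := ellE_strict hm₁.1 h12 hm₂.2
    have hK := ellK_strict hm₁.1 h12 hm₂.2
    have hK1 := ellK_pos hm₁.2
    have hK2 := ellK_pos hm₂.2
    have hE2 := ellE_pos hm₂.2
    have : 2 * ellE m₂ / ellK m₂ < 2 * ellE m₁ / ellK m₁ := by
      rw [div_lt_div_iff₀ hK2 hK1]
      nlinarith
    simp only [hF]
    linarith
  have hmaps : Set.MapsTo F (Set.Ioo (0:ℝ) 1) (Set.Ioo (-1:ℝ) 1) := by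
    intro m hm
    have hK := ellK_pos hm.2
    have hE := ellE_pos hm.2
    have hEK := ellE_lt_ellK hm
    constructor
    · have : 0 < 2 * ellE m / ellK m := by positivity
      simp only [hF]; linarith
    · have : 2 * ellE m / ellK m < 2 := by
        rw [div_lt_iff₀ hK]; linarith
      simp only [hF]; linarith
  have hFcont : ContinuousOn F (Set.Iio (1:ℝ)) := by
    apply ContinuousOn.sub _ continuousOn_const
    exact (continuousOn_const.mul ellE_contOn).div ellK_contOn
      (fun m hm => (ellK_pos hm).ne')
  have hsurj : Set.SurjOn F (Set.Ioo (0:ℝ) 1) (Set.Ioo (-1:ℝ) 1) := by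
    intro y hy
    have hy1 : (0:ℝ) < y + 1 := by linarith [hy.1]
    have hy2 := hy.2
    -- point near 1 where F < y
    set c : ℝ := Real.exp (-(π/(y+1) + 1)) with hcdef
    have hc0 : 0 < c := Real.exp_pos _
    have hc1 : c < 1 := by
      rw [hcdef]
      apply Real.exp_lt_one_iff.2
      have : 0 < π/(y+1) := by positivity
      linarith
    set m₂ : ℝ := 1 - c^2 with hm₂def
    have hm₂mem : m₂ ∈ Set.Ioo (0:ℝ) 1 := by
      constructor
      · nlinarith
      · nlinarith
    have hsq : Real.sqrt (1 - m₂) = c := by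
      rw [hm₂def]; simp [Real.sqrt_sq hc0.le]
    have hKlb : π/(y+1) + 1 ≤ ellK m₂ := by
      have h1 := ellK_ge hm₂mem
      rw [hsq] at h1
      have h2 : π/(y+1) + 1 ≤ Real.log ((π/2 + c)/c) := by
        have hlogc : Real.log c = -(π/(y+1) + 1) := by rw [hcdef, Real.log_exp]
        have : Real.log (1/c) ≤ Real.log ((π/2 + c)/c) := by
          apply Real.log_le_log (by positivity)
          gcongr
          linarith [Real.pi_gt_three]
        rw [Real.log_div one_ne_zero hc0.ne', Real.log_one, hlogc] at this
        linarith
      linarith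
    have hKpos₂ := ellK_pos hm₂mem.2
    have hFm₂ : F m₂ < y := by
      have hElb : 2 * ellE m₂ ≤ π := by
        have := ellE_le hm₂mem.1.le
        linarith
      have h3 : 2 * ellE m₂ / ellK m₂ < y + 1 := by
        rw [div_lt_iff₀ hKpos₂]
        have hπK : π < (y+1) * ellK m₂ := by
          have : (y+1) * (π/(y+1) + 1) ≤ (y+1) * ellK m₂ :=
            mul_le_mul_of_nonneg_left hKlb hy1.le
          have heq : (y+1) * (π/(y+1)) = π := by field_simp
          nlinarith
        linarith
      simp only [hF]; linarith
    -- point near 0 where F > y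
    have hF0 : F 0 = 1 := by
      simp only [hF, ellE_zero, ellK_zero]
      have : π/2 ≠ 0 := by positivity
      field_simp
      ring
    have hcont0 : ContinuousAt F 0 :=
      hFcont.continuousAt (Iio_mem_nhds (by norm_num))
    have htend : Filter.Tendsto F (nhds 0) (nhds 1) := by
      rw [← hF0]; exact hcont0
    have hev : ∀ᶠ m in nhds (0:ℝ), y < F m :=
      htend.eventually_const_lt hy2
    obtain ⟨δ, hδ0, hδ⟩ := Metric.eventually_nhds_iff.1 hev
    set m₁ : ℝ := min (δ/2) (m₂/2) with hm₁def
    have hm₁0 : 0 < m₁ := lt_min (by linarith) (by linarith [hm₂mem.1])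
    have hm₁2 : m₁ < m₂ := (min_le_right _ _).trans_lt (by linarith [hm₂mem.1])
    have hm₁lt1 : m₁ < 1 := hm₁2.trans hm₂mem.2
    have hFm₁ : y < F m₁ := by
      apply hδ
      rw [Real.dist_eq, sub_zero, abs_of_pos hm₁0]
      exact (min_le_left _ _).trans_lt (by linarith)
    have hIcc : Set.Icc m₁ m₂ ⊆ Set.Iio (1:ℝ) := fun x hx =>
      lt_of_le_of_lt hx.2 hm₂mem.2
    have hivt := intermediate_value_Icc' hm₁2.le (hFcont.mono hIcc)
    have hymem : y ∈ Set.Icc (F m₂) (F m₁) := ⟨hFm₂.le, hFm₁.le⟩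
    obtain ⟨m, hmIcc, hmy⟩ := hivt hymem
    exact ⟨m, ⟨lt_of_lt_of_le hm₁0 hmIcc.1, lt_of_le_of_lt hmIcc.2 hm₂mem.2⟩, hmy⟩
  exact ⟨hanti, hmaps, hanti.injOn, hsurj⟩
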